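/- Realization of simple products over ℝ: for any symmetric matrix B ∈ ℝ^{m×m}, there exist N ∈ ℕ and symmetric matrices A₀, A₁, A₂ ∈ ℝ^{N×N} such that the affine pencil A(u,v) = A₀ + uA₁ + vA₂, partitioned as a 2×2 block matrix with m×m (1,1)-block, has a constant invertible (2,2)-block A₂₂ and Schur complement A(u,v)/A₂₂ = uvB for all u, v ∈ ℝ. -/

import Mathlib

open Matrix

section aux

variable {α β β' R : Type*}

lemma myToBlocks₁₁_submatrix (A : Matrix (α ⊕ β) (α ⊕ β) R) (f : β' → β) :
    (A.submatrix (Sum.map id f) (Sum.map id f)).toBlocks₁₁ = A.toBlocks₁₁ := rfl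

lemma myToBlocks₁₂_submatrix (A : Matrix (α ⊕ β) (α ⊕ β) R) (f : β' → β) :
    (A.submatrix (Sum.map id f) (Sum.map id f)).toBlocks₁₂ = A.toBlocks₁₂.submatrix id f := rfl

lemma myToBlocks₂₁_submatrix (A : Matrix (α ⊕ β) (α ⊕ β) R) (f : β' → β) :
    (A.submatrix (Sum.map id f) (Sum.map id f)).toBlocks₂₁ = A.toBlocks₂₁.submatrix f id := rfl

lemma myToBlocks₂₂_submatrix (A : Matrix (α ⊕ β) (α ⊕ β) R) (f : β' → β) :
    (A.submatrix (Sum.map id f) (Sum.map id f)).toBlocks₂₂ = A.toBlocks₂₂.submatrix f f := rfl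

end aux

theorem realization_of_simple_products {m : ℕ}
    (B : Matrix (Fin m) (Fin m) ℝ) (hBs : B.IsSymm) :
    ∃ (N : ℕ) (A0 A1 A2 : Matrix (Fin m ⊕ Fin N) (Fin m ⊕ Fin N) ℝ),
      A0.IsSymm ∧ A1.IsSymm ∧ A2.IsSymm ∧
      A1.toBlocks₂₂ = 0 ∧ A2.toBlocks₂₂ = 0 ∧
      IsUnit (A0.toBlocks₂₂).det ∧
      ∀ u v : ℝ,
        (A0 + u • A1 + v • A2).toBlocks₁₁
          - (A0 + u • A1 + v • A2).toBlocks₁₂ * (A0.toBlocks₂₂)⁻¹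
            * (A0 + u • A1 + v • A2).toBlocks₂₁
        = (u * v) • B := by
  classical
  set ι := (Fin m ⊕ Fin m) with hι
  set C : Matrix ι ι ℝ := -fromBlocks 0 1 1 0 with hC
  set Q : Matrix (Fin m) ι ℝ := fromCols ((1/2 : ℝ) • B) 0 with hQ
  set R : Matrix (Fin m) ι ℝ := fromCols 0 1 with hR
  set M0 : Matrix (Fin m ⊕ ι) (Fin m ⊕ ι) ℝ := fromBlocks 0 0 0 C with hM0
  set M1 : Matrix (Fin m ⊕ ι) (Fin m ⊕ ι) ℝ := fromBlocks 0 Q Qᵀ 0 with hM1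
  set M2 : Matrix (Fin m ⊕ ι) (Fin m ⊕ ι) ℝ := fromBlocks 0 R Rᵀ 0 with hM2
  set e : ι ≃ Fin (m + m) := finSumFinEquiv with he
  set f : (Fin m ⊕ Fin (m + m)) → (Fin m ⊕ ι) := Sum.map id e.symm with hf
  -- C is its own inverse
  have hCC : C * C = 1 := by
    rw [hC, neg_mul_neg, fromBlocks_multiply]
    simp [fromBlocks_one]
  have hCsymm : C.IsSymm := by
    rw [hC, Matrix.IsSymm, transpose_neg, fromBlocks_transpose]
    simp
  refine ⟨m + m, M0.submatrix f f, M1.submatrix f f, M2.submatrix f f, ?_, ?_, ?_, ?_, ?_, ?_, ?_⟩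
  · have h : M0ᵀ = M0 := by rw [hM0, fromBlocks_transpose]; simp [hCsymm.eq]
    rw [Matrix.IsSymm, transpose_submatrix, h]
  · have h : M1ᵀ = M1 := by rw [hM1, fromBlocks_transpose]; simp
    rw [Matrix.IsSymm, transpose_submatrix, h]
  · have h : M2ᵀ = M2 := by rw [hM2, fromBlocks_transpose]; simp
    rw [Matrix.IsSymm, transpose_submatrix, h]
  · rw [hf, myToBlocks₂₂_submatrix, hM1, toBlocks_fromBlocks₂₂]
    ext i j; simp
  · rw [hf, myToBlocks₂₂_submatrix, hM2, toBlocks_fromBlocks₂₂]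
    ext i j; simp
  · rw [hf, myToBlocks₂₂_submatrix, hM0, toBlocks_fromBlocks₂₂,
      Matrix.det_submatrix_equiv_self]
    exact Matrix.isUnit_det_of_right_inverse hCC
  · intro u v
    have hsub : M0.submatrix f f + u • M1.submatrix f f + v • M2.submatrix f f
        = (M0 + u • M1 + v • M2).submatrix f f := by
      simp [Matrix.submatrix_add, Matrix.submatrix_smul]
    rw [hsub]
    -- identify the blocks
    set S : Matrix (Fin m) ι ℝ := u • Q + v • R with hS
    have hM : M0 + u • M1 + v • M2 = fromBlocks 0 S Sᵀ C := by
      rw [hM0, hM1, hM2, hS, fromBlocks_smul, fromBlocks_smul, fromBlocks_add, fromBlocks_add]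
      simp [transpose_add, transpose_smul]
    rw [hM, hf, myToBlocks₁₁_submatrix, myToBlocks₁₂_submatrix, myToBlocks₂₁_submatrix,
      myToBlocks₂₂_submatrix, hM0]
    rw [toBlocks_fromBlocks₁₁, toBlocks_fromBlocks₁₂, toBlocks_fromBlocks₂₁,
      toBlocks_fromBlocks₂₂]
    have hCinv : (C.submatrix (⇑e.symm) (⇑e.symm))⁻¹ = C.submatrix (⇑e.symm) (⇑e.symm) := by
      apply Matrix.inv_eq_right_inv
      rw [Matrix.submatrix_mul_equiv, hCC, Matrix.submatrix_one_equiv]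
    rw [hCinv, Matrix.submatrix_mul_equiv, Matrix.submatrix_mul_equiv]
    -- now everything is over ι, compute
    have hScol : S = fromCols ((u * (1/2)) • B) (v • (1 : Matrix (Fin m) (Fin m) ℝ)) := by
      rw [hS, hQ, hR]
      ext i j
      rcases j with j | j <;> simp [fromCols, smul_smul, mul_assoc]
    have hST : Sᵀ = fromRows ((u * (1/2)) • Bᵀ) (v • (1 : Matrix (Fin m) (Fin m) ℝ)) := by
      rw [hScol, transpose_fromCols, transpose_smul, transpose_smul, transpose_one]
    have key : S * C * Sᵀ = -((u * v) • B) := by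
      rw [hST, hScol, hC, Matrix.mul_neg, fromCols_mul_fromBlocks, Matrix.neg_mul,
        fromCols_mul_fromRows]
      rw [hBs.eq]
      ext i j
      simp [Matrix.smul_apply, Matrix.mul_apply, Finset.mul_sum, Finset.sum_add_distrib]
      ring
    rw [Matrix.submatrix_id_id, key]
    simp
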